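/- With V_φⁿ the n×n Vandermonde matrix on the roots w₁,…,w_n of φ, and V_φ^{m×n} the m×n matrix with (i,j)-entry w_j^{i-1}, one has [H*(f)_{n×m}]ᵀ · V_φⁿ = V_φ^{m×n} · diag(f(w₁), …, f(w_n)). -/
import Mathlib


open Polynomial Matrix

/-- The rotation matrix `H_φ` of a monic polynomial
`φ(x) = xⁿ − φ_{n-1}x^{n-1} − ⋯ − φ₁x − φ₀` (note `φᵢ = -(coeff φ i)` for `i < n`). -/
def rotMat (n : ℕ) (φ : Polynomial ℂ) : Matrix (Fin n) (Fin n) ℂ :=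
  Matrix.of fun i j =>
    if (j : ℕ) + 1 < n then (if (i : ℕ) = (j : ℕ) + 1 then 1 else 0)
    else -φ.coeff (i : ℕ)

/-- The `n × m` generalized ideal matrix `H*(f) = [f, Hf, H²f, …, H^{m-1}f]`. -/
noncomputable def genIdealMat (n m : ℕ) (H : Matrix (Fin n) (Fin n) ℂ) (f : Fin n → ℂ) :
    Matrix (Fin n) (Fin m) ℂ :=
  Matrix.of fun i j => (H ^ (j : ℕ)).mulVec f i

lemma vecMul_rotMat (n : ℕ) (φ : Polynomial ℂ) (hmonic : φ.Monic) (hdeg : φ.natDegree = n)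
    (w : ℂ) (hw : φ.IsRoot w) :
    (fun i : Fin n => w ^ (i : ℕ)) ᵥ* rotMat n φ = w • fun i : Fin n => w ^ (i : ℕ) := by
  funext i
  simp only [vecMul, dotProduct, rotMat, Matrix.of_apply, Pi.smul_apply, smul_eq_mul]
  by_cases h : (i : ℕ) + 1 < n
  · have : ∀ k : Fin n, ((k : ℕ) = (i : ℕ) + 1) ↔ k = ⟨(i : ℕ) + 1, h⟩ := by
      intro k; constructor <;> intro hk <;> [exact Fin.ext hk; simp [hk]]
    simp only [h, if_true]
    have hsum : (∑ k : Fin n, w ^ (k:ℕ) * if (k:ℕ) = (i:ℕ)+1 then 1 else 0)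
        = ∑ k : Fin n, if k = ⟨(i:ℕ)+1, h⟩ then w ^ (k:ℕ) else 0 := by
      refine Finset.sum_congr rfl fun k _ => ?_
      by_cases hk : k = ⟨(i:ℕ)+1, h⟩ <;> simp [hk, (this k).not] <;> simp_all
    rw [hsum, Finset.sum_ite_eq']
    simp [pow_succ, mul_comm]
  · have hin : (i : ℕ) + 1 = n := Nat.le_antisymm (Nat.succ_le_of_lt i.isLt) (not_lt.mp h)
    simp only [h, if_false]
    have heval : φ.eval w = ∑ k ∈ Finset.range (n + 1), φ.coeff k * w ^ k := by
      rw [← hdeg]; exact φ.eval_eq_sum_range w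
    rw [Finset.sum_range_succ] at heval
    have hlead : φ.coeff n = 1 := by rw [← hdeg]; exact hmonic.coeff_natDegree
    rw [hw.eq_zero] at heval
    have hsum : ∑ k ∈ Finset.range n, φ.coeff k * w ^ k = -w ^ n := by
      rw [hlead, one_mul] at heval; linear_combination -heval
    calc ∑ k : Fin n, w ^ (k : ℕ) * -φ.coeff (k : ℕ)
        = -∑ k ∈ Finset.range n, φ.coeff k * w ^ k := by
          rw [← Fin.sum_univ_eq_sum_range (fun k => φ.coeff k * w ^ k)]
          simp [mul_comm]
      _ = w ^ n := by rw [hsum]; ring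
      _ = w ^ ((i : ℕ) + 1) := by rw [hin]
      _ = w * w ^ (i : ℕ) := by rw [pow_succ, mul_comm]

lemma vecMul_rotMat_pow (n : ℕ) (φ : Polynomial ℂ) (hmonic : φ.Monic) (hdeg : φ.natDegree = n)
    (w : ℂ) (hw : φ.IsRoot w) (p : ℕ) :
    (fun i : Fin n => w ^ (i : ℕ)) ᵥ* (rotMat n φ) ^ p = w ^ p • fun i : Fin n => w ^ (i : ℕ) := by
  induction p with
  | zero => simp
  | succ p ih =>
    rw [pow_succ, ← vecMul_vecMul, ih, Matrix.smul_vecMul, vecMul_rotMat n φ hmonic hdeg w hw, smul_smul, pow_succ]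


/-- With `V_φⁿ` the `n × n` Vandermonde matrix on the distinct nonzero roots `w₁,…,wₙ` of `φ`
and `V_φ^{m×n}` the `m × n` matrix with `(i,j)` entry `wⱼ^{i-1}`, one has
`[H*(f)_{n×m}]ᵀ ⬝ V_φⁿ = V_φ^{m×n} ⬝ diag(f(w₁), …, f(wₙ))`. -/
theorem genIdealMat_transpose_mul_vandermonde (n m : ℕ) (hn : 0 < n) (φ : Polynomial ℂ)
    (hmonic : φ.Monic) (hdeg : φ.natDegree = n) (h0 : φ.coeff 0 ≠ 0)
    (w : Fin n → ℂ) (hinj : Function.Injective w)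
    (hroots : ∀ j, φ.IsRoot (w j) ∧ w j ≠ 0) (f : Fin n → ℝ) :
    (genIdealMat n m (rotMat n φ) (fun i => (f i : ℂ)))ᵀ *
        (Matrix.of fun i j : Fin n => w j ^ (i : ℕ)) =
      (Matrix.of fun (i : Fin m) (j : Fin n) => w j ^ (i : ℕ)) *
        Matrix.diagonal (fun j : Fin n => ∑ k : Fin n, (f k : ℂ) * w j ^ (k : ℕ)) := by
  ext i j
  rw [Matrix.mul_apply, Matrix.mul_diagonal]
  simp only [genIdealMat, transpose_apply, Matrix.of_apply]
  have key := vecMul_rotMat_pow n φ hmonic hdeg (w j) (hroots j).1 (i : ℕ)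
  have : ∑ k : Fin n, ((rotMat n φ) ^ (i : ℕ)).mulVec (fun i => (f i : ℂ)) k * w j ^ (k : ℕ)
      = ((fun k : Fin n => w j ^ (k : ℕ)) ᵥ* (rotMat n φ) ^ (i : ℕ)) ⬝ᵥ (fun i => (f i : ℂ)) := by
    rw [← Matrix.dotProduct_mulVec]
    simp [dotProduct, mul_comm]
  rw [this, key]
  simp [dotProduct, Finset.mul_sum, mul_comm, mul_assoc, mul_left_comm]
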